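/- Let p be an odd prime. Then in ℤ/pℤ: Σ_{0 < k < p, k even} 1/k = −q_p and Σ_{0 < k < p, k odd} 1/k = q_p, where q_p is the Fermat quotient of 2. (In the paper's notation, S_p(1) = ζ^{(2)}_p(1) = −q_p and t_p(1) = T_p(1) = q_p.) -/

import Mathlib

open Finset

/-- The Fermat quotient of 2: the residue class mod `p` of `(2^{p-1} - 1)/p`. -/
def qp (p : ℕ) : ZMod p := (((2 ^ (p - 1) - 1) / p : ℕ) : ZMod p)

private lemma choose_sub_one_cast {p : ℕ} (hp : p.Prime) :
    ∀ j, j < p → (((p - 1).choose j : ℕ) : ZMod p) = (-1) ^ j := by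
  intro j
  induction j with
  | zero => simp
  | succ j ih =>
    intro hj
    have h1 : p.choose (j + 1) = (p - 1).choose j + (p - 1).choose (j + 1) := by
      have h := Nat.choose_succ_succ (p - 1) j
      simp only [Nat.succ_eq_add_one] at h
      rw [Nat.sub_add_cancel hp.one_lt.le] at h
      exact h
    have h2 : ((p.choose (j + 1) : ℕ) : ZMod p) = 0 :=
      (ZMod.natCast_eq_zero_iff _ _).mpr
        (hp.dvd_choose_self (Nat.succ_ne_zero j) hj)
    have h3 := ih (Nat.lt_of_succ_lt hj)
    have h4 : ((0 : ZMod p)) = (-1) ^ j + ((p - 1).choose (j + 1) : ZMod p) := by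
      rw [← h2, h1]; push_cast; rw [h3]
    have h5 : ((p - 1).choose (j + 1) : ZMod p) = -(-1) ^ j := by linear_combination -h4
    rw [h5, pow_succ]; ring

/-- For `0 < k < p`, `(choose p k / p) * k = choose (p-1) (k-1)` in `ℕ`. -/
private lemma div_choose_mul {p k : ℕ} (hp : p.Prime) (hk0 : 0 < k) (hkp : k < p) :
    (p.choose k / p) * k = (p - 1).choose (k - 1) := by
  have hdvd : p ∣ p.choose k := hp.dvd_choose_self hk0.ne' hkp
  have h1 : p * (p - 1).choose (k - 1) = p.choose k * k := by
    have h := Nat.add_one_mul_choose_eq (p - 1) (k - 1)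
    rw [Nat.sub_add_cancel hp.one_lt.le, Nat.sub_add_cancel hk0] at h
    exact h
  obtain ⟨c, hc⟩ := hdvd
  have hc2 : p.choose k / p = c := by rw [hc, Nat.mul_div_cancel_left _ hp.pos]
  rw [hc2]
  have h3 : p * (p - 1).choose (k - 1) = p * (c * k) := by
    rw [h1, hc]; ring
  exact (Nat.eq_of_mul_eq_mul_left hp.pos h3).symm

/-- For an odd prime `p`, in `ℤ/pℤ`:
`∑_{0<k<p, k even} 1/k = -q_p` and `∑_{0<k<p, k odd} 1/k = q_p`. -/
theorem stmt8 (p : ℕ) (hp : p.Prime) (hp2 : p ≠ 2) :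
    (∑ k ∈ (Finset.Ioo 0 p).filter (fun k => k % 2 = 0), ((k : ZMod p))⁻¹ = - qp p) ∧
    (∑ k ∈ (Finset.Ioo 0 p).filter (fun k => k % 2 = 1), ((k : ZMod p))⁻¹ = qp p) := by
  haveI : Fact p.Prime := ⟨hp⟩
  have hp3 : 3 ≤ p := by
    have := hp.two_le
    omega
  have hcast0 : ∀ k, 0 < k → k < p → ((k : ℕ) : ZMod p) ≠ 0 := by
    intro k hk0 hkp h
    have := (ZMod.natCast_eq_zero_iff _ _).mp h
    exact absurd (Nat.le_of_dvd hk0 this) (not_le.mpr hkp)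
  have h2z : (2 : ZMod p) ≠ 0 := by
    have h := hcast0 2 (by omega) (by omega)
    exact_mod_cast h
  set E := ∑ k ∈ (Finset.Ioo 0 p).filter (fun k => k % 2 = 0), ((k : ZMod p))⁻¹ with hE
  set O := ∑ k ∈ (Finset.Ioo 0 p).filter (fun k => k % 2 = 1), ((k : ZMod p))⁻¹ with hO
  -- Step 1: total sum is zero
  have hpodd : p % 2 = 1 := Nat.odd_iff.mp (hp.odd_of_ne_two hp2)
  have hS : ∑ k ∈ Finset.Ioo 0 p, ((k : ZMod p))⁻¹ = 0 := by
    apply Finset.sum_involution (fun k _ => p - k)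
    · intro k hk
      simp only [Finset.mem_Ioo] at hk
      show ((k : ZMod p))⁻¹ + (((p - k : ℕ) : ZMod p))⁻¹ = 0
      have hc : ((p - k : ℕ) : ZMod p) = -(k : ZMod p) := by
        rw [Nat.cast_sub hk.2.le, ZMod.natCast_self]; ring
      rw [hc, inv_neg]; ring
    · intro k hk _
      simp only [Finset.mem_Ioo] at hk
      show p - k ≠ k
      omega
    · intro k hk
      simp only [Finset.mem_Ioo] at hk
      show p - k ∈ Finset.Ioo 0 p
      simp only [Finset.mem_Ioo]
      omega
    · intro k hk
      simp only [Finset.mem_Ioo] at hk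
      show p - (p - k) = k
      omega
  -- Step 2: E + O = total
  have hEO : E + O = 0 := by
    rw [hE, hO, ← hS]
    rw [← Finset.sum_filter_add_sum_filter_not (Finset.Ioo 0 p) (fun k => k % 2 = 0)]
    congr 1
    apply Finset.sum_congr _ (fun _ _ => rfl)
    apply Finset.filter_congr
    intro k _
    constructor <;> omega
  -- Step 3: casting the divided binomial coefficients
  have hA : ∀ k ∈ Finset.Ioo 0 p,
      ((p.choose k / p : ℕ) : ZMod p) = (-1) ^ (k - 1) * ((k : ZMod p))⁻¹ := by
    intro k hk
    simp only [Finset.mem_Ioo] at hk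
    have hkz := hcast0 k hk.1 hk.2
    have h1 : ((p.choose k / p : ℕ) : ZMod p) * (k : ZMod p) = (-1) ^ (k - 1) := by
      calc ((p.choose k / p : ℕ) : ZMod p) * (k : ZMod p)
          = ((p.choose k / p * k : ℕ) : ZMod p) := by push_cast; ring
        _ = (((p - 1).choose (k - 1) : ℕ) : ZMod p) := by
            rw [div_choose_mul hp hk.1 hk.2]
        _ = (-1) ^ (k - 1) := choose_sub_one_cast hp (k - 1) (by omega)
    calc ((p.choose k / p : ℕ) : ZMod p)
        = ((p.choose k / p : ℕ) : ZMod p) * (k : ZMod p) * ((k : ZMod p))⁻¹ := by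
          rw [mul_assoc, mul_inv_cancel₀ hkz, mul_one]
      _ = (-1) ^ (k - 1) * ((k : ZMod p))⁻¹ := by rw [h1]
  -- Step 4: sum of divided binomials = O - E
  have hAsum : ((∑ k ∈ Finset.Ioo 0 p, p.choose k / p : ℕ) : ZMod p) = O - E := by
    push_cast
    rw [Finset.sum_congr rfl hA]
    rw [← Finset.sum_filter_add_sum_filter_not (Finset.Ioo 0 p) (fun k => k % 2 = 0)]
    have he : ∑ k ∈ (Finset.Ioo 0 p).filter (fun k => k % 2 = 0),
        (-1 : ZMod p) ^ (k - 1) * ((k : ZMod p))⁻¹ = -E := by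
      rw [hE, ← Finset.sum_neg_distrib]
      apply Finset.sum_congr rfl
      intro k hk
      simp only [Finset.mem_filter, Finset.mem_Ioo] at hk
      have : Odd (k - 1) := by
        rw [Nat.odd_iff]; omega
      rw [this.neg_one_pow]; ring
    have ho : ∑ k ∈ (Finset.Ioo 0 p).filter (fun k => ¬ k % 2 = 0),
        (-1 : ZMod p) ^ (k - 1) * ((k : ZMod p))⁻¹ = O := by
      rw [hO]
      have : (Finset.Ioo 0 p).filter (fun k => ¬ k % 2 = 0)
          = (Finset.Ioo 0 p).filter (fun k => k % 2 = 1) := by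
        apply Finset.filter_congr
        intro k _
        constructor <;> omega
      rw [this]
      apply Finset.sum_congr rfl
      intro k hk
      simp only [Finset.mem_filter, Finset.mem_Ioo] at hk
      have : Even (k - 1) := by
        rw [Nat.even_iff]; omega
      rw [this.neg_one_pow]; ring
    rw [he, ho]; ring
  -- Step 5: the natural number identity
  have hdvdF : p ∣ 2 ^ (p - 1) - 1 := by
    have hc : ((2 ^ (p - 1) - 1 : ℕ) : ZMod p) = 0 := by
      have h1le : 1 ≤ 2 ^ (p - 1) := Nat.one_le_two_pow
      rw [Nat.cast_sub h1le]
      push_cast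
      rw [ZMod.pow_card_sub_one_eq_one h2z]
      ring
    exact (ZMod.natCast_eq_zero_iff _ _).mp hc
  have hnat : ∑ k ∈ Finset.Ioo 0 p, p.choose k / p = 2 * ((2 ^ (p - 1) - 1) / p) := by
    have hq : p * ((2 ^ (p - 1) - 1) / p) = 2 ^ (p - 1) - 1 := Nat.mul_div_cancel' hdvdF
    have hmul : p * (∑ k ∈ Finset.Ioo 0 p, p.choose k / p)
        = ∑ k ∈ Finset.Ioo 0 p, p.choose k := by
      rw [Finset.mul_sum]
      apply Finset.sum_congr rfl
      intro k hk
      simp only [Finset.mem_Ioo] at hk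
      exact Nat.mul_div_cancel' (hp.dvd_choose_self hk.1.ne' hk.2)
    have hsum : 1 + (∑ k ∈ Finset.Ioo 0 p, p.choose k) + 1 = 2 ^ p := by
      have h0 := Nat.sum_range_choose p
      rw [Finset.range_eq_Ico, Finset.sum_Ico_succ_top (by omega),
        Finset.sum_eq_sum_Ico_succ_bot (by omega)] at h0
      have hset : Finset.Ico (0 + 1) p = Finset.Ioo 0 p := Finset.Ico_add_one_left_eq_Ioo 0 p
      rw [hset] at h0
      simp only [Nat.choose_zero_right, Nat.choose_self] at h0
      omega
    have h2p : 2 ^ p = 2 * 2 ^ (p - 1) := by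
      rw [← pow_succ']
      congr 1
      omega
    have h1le : 1 ≤ 2 ^ (p - 1) := Nat.one_le_two_pow
    have key : p * (∑ k ∈ Finset.Ioo 0 p, p.choose k / p)
        = p * (2 * ((2 ^ (p - 1) - 1) / p)) := by
      have : p * (2 * ((2 ^ (p - 1) - 1) / p)) = 2 * (p * ((2 ^ (p - 1) - 1) / p)) := by ring
      rw [this, hq, hmul]
      omega
    exact Nat.eq_of_mul_eq_mul_left hp.pos key
  -- conclude
  have hOE : O - E = 2 * qp p := by
    rw [← hAsum, hnat, qp]
    push_cast
    ring
  have hO' : O = qp p := by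
    have h2O : 2 * O = 2 * qp p := by linear_combination hOE + hEO
    exact mul_left_cancel₀ h2z h2O
  have hE' : E = - qp p := by linear_combination hEO - hO'
  exact ⟨hE', hO'⟩
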